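/- Let F be a field, let n = ν·n_ℓ with ν ≥ 1 and n_ℓ ≥ 2, let γ ∈ F be a primitive n-th root of unity, and let integers r, d, a, p satisfy 1 ≤ p ≤ r ≤ d ≤ n_ℓ − 1 and 0 ≤ a ≤ ν − 1. For i ∈ {0, …, ν−1} let f_i(X) = X^{n_ℓ} − γ^{i·n_ℓ}. Consider the set W of tuples (M₀, M₁, …, M_{d−1}) of polynomials in F[X], each of degree less than n, such that, writing m_{i,j} = M_j mod f_i: (C1) for all i, j, the coefficient of X^t in m_{i,j} is zero for all t ≥ d; (C2) for all i and all t, j ∈ {0,…,d−1}, the coefficient of X^t in m_{i,j} equals the coefficient of X^j in m_{i,t}; (C3) for all i and all t, j with r ≤ t ≤ d−1 and r ≤ j ≤ d−1, the coefficient of X^t in m_{i,j} is zero; (C4) deg M_j ≤ a·n_ℓ + d − 1 for 0 ≤ j ≤ p−1, and deg M_j ≤ a·n_ℓ + p − 1 for p ≤ j ≤ d−1. Then W is an F-subspace of the d-fold product of F[X], and its dimension over F equals a·(rd − r(r−1)/2) + (pd − p(p−1)/2). -/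

import Mathlib

open Polynomial Finset

namespace MBRAux

variable {F : Type*} [Field F]




variable {F : Type*} [Field F]

lemma modByMonic_eq_of_dvd_sub {f M R : F[X]} (hf : f.Monic)
    (hdvd : f ∣ M - R) (hdeg : R.degree < f.degree) : M %ₘ f = R := by
  have h1 : M = (M - R) + R := by ring
  rw [h1, Polynomial.add_modByMonic,
    (Polynomial.modByMonic_eq_zero_iff_dvd hf).mpr hdvd,
    (Polynomial.modByMonic_eq_self_iff hf).mpr hdeg, zero_add]

lemma vand_kill {ν : ℕ} {ζ : F} (hζ : IsPrimitiveRoot ζ ν)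
    (v : Fin ν → F) (h : ∀ i : Fin ν, ∑ s : Fin ν, ζ ^ ((i : ℕ) * (s : ℕ)) * v s = 0) :
    v = 0 := by
  have hinj : Function.Injective (fun i : Fin ν => ζ ^ (i : ℕ)) := by
    intro i j hij
    exact Fin.ext (hζ.pow_inj i.isLt j.isLt hij)
  apply Matrix.eq_zero_of_mulVec_eq_zero
    (Matrix.det_vandermonde_ne_zero_iff.mpr hinj)
  funext i
  simpa [Matrix.mulVec, Matrix.vandermonde, dotProduct, ← pow_mul] using h i

/-- exponent decomposition is injective -/
lemma exp_inj {nℓ s s' t t' : ℕ} (ht : t < nℓ) (ht' : t' < nℓ)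
    (h : s * nℓ + t = s' * nℓ + t') : s = s' ∧ t = t' := by
  rcases lt_trichotomy s s' with hs | hs | hs
  · exfalso
    have h1 : (s + 1) * nℓ ≤ s' * nℓ := Nat.mul_le_mul_right _ (by omega)
    have h2 : (s + 1) * nℓ = s * nℓ + nℓ := by ring
    omega
  · constructor
    · exact hs
    · subst hs; omega
  · exfalso
    have h1 : (s' + 1) * nℓ ≤ s * nℓ := Nat.mul_le_mul_right _ (by omega)
    have h2 : (s' + 1) * nℓ = s' * nℓ + nℓ := by ring
    omega

lemma coeff_modByMonic_X_pow_sub_C {ν nℓ : ℕ} (hnℓ : 0 < nℓ) (θ : F) (M : F[X])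
    (hM : M.degree < ((ν * nℓ : ℕ) : WithBot ℕ)) {t : ℕ} (ht : t < nℓ) :
    (M %ₘ (X ^ nℓ - C θ)).coeff t
      = ∑ s : Fin ν, θ ^ (s : ℕ) * M.coeff ((s : ℕ) * nℓ + t) := by
  have hf : (X ^ nℓ - C θ : F[X]).Monic := monic_X_pow_sub_C θ hnℓ.ne'
  have hfdeg : (X ^ nℓ - C θ : F[X]).degree = nℓ := degree_X_pow_sub_C hnℓ θ
  set R : F[X] := ∑ s : Fin ν, ∑ u : Fin nℓ,
      C (θ ^ (s : ℕ) * M.coeff ((s : ℕ) * nℓ + (u : ℕ))) * X ^ (u : ℕ) with hR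
  have hmod : M %ₘ (X ^ nℓ - C θ) = R := by
    apply modByMonic_eq_of_dvd_sub hf
    · -- divisibility
      have hMsum : M = ∑ s : Fin ν, ∑ u : Fin nℓ,
          C (M.coeff ((s : ℕ) * nℓ + (u : ℕ))) * X ^ ((s : ℕ) * nℓ + (u : ℕ)) := by
        rcases eq_or_ne M 0 with h0 | h0
        · simp [h0]
        · have hnd : M.natDegree < ν * nℓ := by
            rwa [← Polynomial.natDegree_lt_iff_degree_lt h0] at hM
          conv_lhs => rw [M.as_sum_range' (ν * nℓ) hnd]
          rw [← Fin.sum_univ_eq_sum_range (fun k => (monomial k) (M.coeff k)) (ν * nℓ)]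
          rw [← Equiv.sum_comp finProdFinEquiv
            (fun y : Fin (ν * nℓ) => (monomial (y : ℕ)) (M.coeff (y : ℕ)))]
          rw [Fintype.sum_prod_type]
          refine Finset.sum_congr rfl fun s _ => Finset.sum_congr rfl fun u _ => ?_
          have he : ((finProdFinEquiv (s, u) : Fin (ν * nℓ)) : ℕ)
              = (s : ℕ) * nℓ + (u : ℕ) := by
            simp [finProdFinEquiv]
            ring
          rw [he, Polynomial.C_mul_X_pow_eq_monomial]
      rw [hMsum, hR, ← Finset.sum_sub_distrib]
      apply Finset.dvd_sum
      intro s _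
      rw [← Finset.sum_sub_distrib]
      apply Finset.dvd_sum
      intro u _
      have key : C (M.coeff ((s : ℕ) * nℓ + (u : ℕ))) * X ^ ((s : ℕ) * nℓ + (u : ℕ))
          - C (θ ^ (s : ℕ) * M.coeff ((s : ℕ) * nℓ + (u : ℕ))) * X ^ (u : ℕ)
          = ((X ^ nℓ) ^ (s : ℕ) - (C θ) ^ (s : ℕ))
            * (C (M.coeff ((s : ℕ) * nℓ + (u : ℕ))) * X ^ (u : ℕ)) := by
        have hx : (X : F[X]) ^ ((s : ℕ) * nℓ + (u : ℕ))
            = (X ^ nℓ) ^ (s : ℕ) * X ^ (u : ℕ) := by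
          rw [← pow_mul, ← pow_add, mul_comm (s : ℕ) nℓ]
        rw [hx, map_mul, ← map_pow]
        ring
      rw [key]
      exact Dvd.dvd.mul_right (sub_dvd_pow_sub_pow _ _ _) _
    · -- degree
      rw [hfdeg, hR]
      refine lt_of_le_of_lt (degree_sum_le _ _) ?_
      rw [Finset.sup_lt_iff (by exact WithBot.bot_lt_coe _ : (⊥ : WithBot ℕ) < (nℓ : ℕ))]
      intro s _
      refine lt_of_le_of_lt (degree_sum_le _ _) ?_
      rw [Finset.sup_lt_iff (by exact WithBot.bot_lt_coe _ : (⊥ : WithBot ℕ) < (nℓ : ℕ))]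
      intro u _
      exact lt_of_le_of_lt (degree_C_mul_X_pow_le _ _) (by exact_mod_cast u.isLt)
  rw [hmod, hR, finset_sum_coeff]
  refine Finset.sum_congr rfl fun s _ => ?_
  rw [finset_sum_coeff]
  rw [Finset.sum_eq_single (⟨t, ht⟩ : Fin nℓ)]
  · rw [coeff_C_mul, coeff_X_pow, if_pos rfl, mul_one]
  · intro u _ hu
    simp only [coeff_C_mul, coeff_X_pow]
    rw [if_neg, mul_zero]
    intro hc
    exact hu (by ext; simp [← hc])
  · intro hmem
    exact absurd (Finset.mem_univ _) hmem




lemma sum_tri (c d : ℕ) (hcd : c ≤ d) :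
    ∑ t ∈ Finset.range c, (d - t) = c * d - c * (c - 1) / 2 := by
  induction c with
  | zero => simp
  | succ c ih =>
    rw [Finset.sum_range_succ, ih (by omega)]
    simp only [Nat.add_sub_cancel]
    have h1 : (c + 1) * d = c * d + d := by ring
    have h2 : (c + 1) * c = c * (c - 1) + 2 * c := by
      cases c with
      | zero => simp
      | succ m => simp [Nat.succ_sub_one]; ring
    have h3 : c * (c - 1) % 2 = 0 := by
      cases c with
      | zero => simp
      | succ m =>
        simp only [Nat.succ_sub_one]
        rcases Nat.even_mul_succ_self m with ⟨k, hk⟩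
        have hcomm : (m + 1) * m = m * (m + 1) := by ring
        omega
    have h4 : c * (c - 1) ≤ c * d := Nat.mul_le_mul_left _ (by omega)
    omega

lemma card_tri (c d : ℕ) (hcd : c ≤ d) :
    ((Finset.univ : Finset (Fin d × Fin d)).filter
      (fun x => (x.1 : ℕ) ≤ (x.2 : ℕ) ∧ (x.1 : ℕ) < c)).card
      = c * d - c * (c - 1) / 2 := by
  rw [Finset.card_filter, Fintype.sum_prod_type]
  have hstep : ∀ t : Fin d,
      (∑ j : Fin d, if (t : ℕ) ≤ (j : ℕ) ∧ (t : ℕ) < c then 1 else 0)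
        = if (t : ℕ) < c then d - (t : ℕ) else 0 := by
    intro t
    by_cases htc : (t : ℕ) < c
    · simp only [htc, and_true, if_true]
      rw [Fin.sum_univ_eq_sum_range (fun j => if (t : ℕ) ≤ j then 1 else 0)]
      rw [← Finset.card_filter]
      have : (Finset.range d).filter (fun j => (t : ℕ) ≤ j) = Finset.Ico (t : ℕ) d := by
        ext x; simp [Finset.mem_filter, Finset.mem_range, Finset.mem_Ico, and_comm]
      simp [this, Nat.card_Ico]
    · simp [htc]
  rw [Finset.sum_congr rfl (fun t _ => hstep t)]
  rw [Fin.sum_univ_eq_sum_range (fun t => if t < c then d - t else 0)]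
  rw [← Finset.sum_filter]
  have : (Finset.range d).filter (fun t => t < c) = Finset.range c := by
    ext x; simp [Finset.mem_filter, Finset.mem_range]; omega
  rw [this, sum_tri c d hcd]



end MBRAux

open Polynomial

/-- Dimension of the code with MBR all-symbol locality built from
Product-Matrix MBR local codes and Tamo-Barg-style polynomial lifting: the set
`W` of tuples of column polynomials satisfying the PM-MBR symmetry/support
conditions (C1)–(C3) in each local group and the global degree caps (C4) is an
`F`-subspace of `F[X]^d` of dimension
`a·(rd − r(r−1)/2) + (pd − p(p−1)/2)`. -/
theorem mbr_locality_dimension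
    (F : Type*) [Field F] (ν nℓ r d a p : ℕ)
    (hν : 1 ≤ ν) (hnℓ : 2 ≤ nℓ)
    (hp : 1 ≤ p) (hpr : p ≤ r) (hrd : r ≤ d) (hd : d ≤ nℓ - 1)
    (ha : a ≤ ν - 1)
    (γ : F) (hγ : IsPrimitiveRoot γ (ν * nℓ)) :
    ∃ S : Submodule F (Fin d → F[X]),
      (S : Set (Fin d → F[X]))
        = {M : Fin d → F[X] |
            (∀ j : Fin d, (M j).degree < ((ν * nℓ : ℕ) : WithBot ℕ)) ∧
            -- (C1)
            (∀ (i : Fin ν) (j : Fin d) (t : ℕ), d ≤ t →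
              ((M j) %ₘ (X ^ nℓ - Polynomial.C (γ ^ ((i : ℕ) * nℓ)))).coeff t = 0) ∧
            -- (C2)
            (∀ (i : Fin ν) (t j : Fin d),
              ((M j) %ₘ (X ^ nℓ - Polynomial.C (γ ^ ((i : ℕ) * nℓ)))).coeff (t : ℕ)
                = ((M t) %ₘ (X ^ nℓ - Polynomial.C (γ ^ ((i : ℕ) * nℓ)))).coeff (j : ℕ)) ∧
            -- (C3)
            (∀ (i : Fin ν) (j : Fin d) (t : ℕ),
              r ≤ t → t ≤ d - 1 → r ≤ (j : ℕ) →
              ((M j) %ₘ (X ^ nℓ - Polynomial.C (γ ^ ((i : ℕ) * nℓ)))).coeff t = 0) ∧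
            -- (C4)
            (∀ j : Fin d, (j : ℕ) ≤ p - 1 →
              (M j).degree ≤ ((a * nℓ + d - 1 : ℕ) : WithBot ℕ)) ∧
            (∀ j : Fin d, p ≤ (j : ℕ) →
              (M j).degree ≤ ((a * nℓ + p - 1 : ℕ) : WithBot ℕ))} ∧
      Module.finrank F S
        = a * (r * d - r * (r - 1) / 2) + (p * d - p * (p - 1) / 2) := by
  have hν0 : 0 < ν := hν
  have hnℓ0 : 0 < nℓ := by omega
  have hd0 : 0 < d := by omega
  have hdn : d < nℓ := by omega
  have haν : a < ν := by omega
  have hζ : IsPrimitiveRoot (γ ^ nℓ) ν := hγ.pow (Nat.mul_pos hν0 hnℓ0) (mul_comm ν nℓ)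
  have hfmon : ∀ i : Fin ν, (X ^ nℓ - C (γ ^ ((i : ℕ) * nℓ)) : F[X]).Monic :=
    fun i => monic_X_pow_sub_C _ hnℓ0.ne'
  have hfdeg : ∀ i : Fin ν, (X ^ nℓ - C (γ ^ ((i : ℕ) * nℓ)) : F[X]).degree = nℓ :=
    fun i => degree_X_pow_sub_C hnℓ0 _
  -- the residue coefficient formula
  have hres : ∀ (M : F[X]), M.degree < ((ν * nℓ : ℕ) : WithBot ℕ) →
      ∀ (i : Fin ν) (t : ℕ), t < nℓ →
      (M %ₘ (X ^ nℓ - C (γ ^ ((i : ℕ) * nℓ)))).coeff t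
        = ∑ s : Fin ν, (γ ^ nℓ) ^ ((i : ℕ) * (s : ℕ)) * M.coeff ((s : ℕ) * nℓ + t) := by
    intro M hM i t ht
    rw [MBRAux.coeff_modByMonic_X_pow_sub_C hnℓ0 _ M hM ht]
    refine Finset.sum_congr rfl fun s _ => ?_
    rw [← pow_mul, ← pow_mul]
    congr 1
    ring
  -- kill lemma
  have hkill : ∀ (M : F[X]), M.degree < ((ν * nℓ : ℕ) : WithBot ℕ) →
      ∀ (t : ℕ), t < nℓ →
      (∀ i : Fin ν, (M %ₘ (X ^ nℓ - C (γ ^ ((i : ℕ) * nℓ)))).coeff t = 0) →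
      ∀ s : Fin ν, M.coeff ((s : ℕ) * nℓ + t) = 0 := by
    intro M hM t ht h s
    have h0 := MBRAux.vand_kill hζ (fun s => M.coeff ((s : ℕ) * nℓ + t))
      (fun i => by rw [← hres M hM i t ht]; exact h i)
    exact congrFun h0 s
  classical
  -- the index of free coordinates
  set Cond : Fin ν × Fin d × Fin d → Prop := fun x =>
    (x.2.1 : ℕ) ≤ (x.2.2 : ℕ) ∧ (x.2.1 : ℕ) < r ∧
      ((x.1 : ℕ) < a ∨ ((x.1 : ℕ) = a ∧ (x.2.1 : ℕ) < p)) with hCond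
  -- the subspace
  -- the condition set
  set WSet : Set (Fin d → F[X]) := {M : Fin d → F[X] |
            (∀ j : Fin d, (M j).degree < ((ν * nℓ : ℕ) : WithBot ℕ)) ∧
            (∀ (i : Fin ν) (j : Fin d) (t : ℕ), d ≤ t →
              ((M j) %ₘ (X ^ nℓ - Polynomial.C (γ ^ ((i : ℕ) * nℓ)))).coeff t = 0) ∧
            (∀ (i : Fin ν) (t j : Fin d),
              ((M j) %ₘ (X ^ nℓ - Polynomial.C (γ ^ ((i : ℕ) * nℓ)))).coeff (t : ℕ)
                = ((M t) %ₘ (X ^ nℓ - Polynomial.C (γ ^ ((i : ℕ) * nℓ)))).coeff (j : ℕ)) ∧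
            (∀ (i : Fin ν) (j : Fin d) (t : ℕ),
              r ≤ t → t ≤ d - 1 → r ≤ (j : ℕ) →
              ((M j) %ₘ (X ^ nℓ - Polynomial.C (γ ^ ((i : ℕ) * nℓ)))).coeff t = 0) ∧
            (∀ j : Fin d, (j : ℕ) ≤ p - 1 →
              (M j).degree ≤ ((a * nℓ + d - 1 : ℕ) : WithBot ℕ)) ∧
            (∀ j : Fin d, p ≤ (j : ℕ) →
              (M j).degree ≤ ((a * nℓ + p - 1 : ℕ) : WithBot ℕ))} with hWSet
  have hadd : ∀ M N : Fin d → F[X], M ∈ WSet → N ∈ WSet → M + N ∈ WSet := by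
    rintro M N ⟨hM1, hM2, hM3, hM4, hM5, hM6⟩ ⟨hN1, hN2, hN3, hN4, hN5, hN6⟩
    refine ⟨?_, ?_, ?_, ?_, ?_, ?_⟩
    · intro j
      simp only [Pi.add_apply]
      exact lt_of_le_of_lt (degree_add_le _ _) (max_lt (hM1 j) (hN1 j))
    · intro i j t ht
      simp only [Pi.add_apply, Polynomial.add_modByMonic, coeff_add, hM2 i j t ht,
        hN2 i j t ht, add_zero]
    · intro i t j
      simp only [Pi.add_apply, Polynomial.add_modByMonic, coeff_add, hM3 i t j, hN3 i t j]
    · intro i j t h1 h2 h3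
      simp only [Pi.add_apply, Polynomial.add_modByMonic, coeff_add, hM4 i j t h1 h2 h3,
        hN4 i j t h1 h2 h3, add_zero]
    · intro j hj
      simp only [Pi.add_apply]
      exact le_trans (degree_add_le _ _) (max_le (hM5 j hj) (hN5 j hj))
    · intro j hj
      simp only [Pi.add_apply]
      exact le_trans (degree_add_le _ _) (max_le (hM6 j hj) (hN6 j hj))
  have hzero : (0 : Fin d → F[X]) ∈ WSet := by
    refine ⟨fun j => ?_, by simp [Polynomial.zero_modByMonic],
      by simp [Polynomial.zero_modByMonic], by simp [Polynomial.zero_modByMonic],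
      by simp, by simp⟩
    simp only [Pi.zero_apply, degree_zero, Nat.cast_withBot]
    exact WithBot.bot_lt_coe _
  have hsmul : ∀ (c : F) (M : Fin d → F[X]), M ∈ WSet → c • M ∈ WSet := by
    rintro c M ⟨hM1, hM2, hM3, hM4, hM5, hM6⟩
    refine ⟨?_, ?_, ?_, ?_, ?_, ?_⟩
    · intro j
      simp only [Pi.smul_apply]
      exact lt_of_le_of_lt (degree_smul_le _ _) (hM1 j)
    · intro i j t ht
      simp only [Pi.smul_apply, Polynomial.smul_modByMonic, coeff_smul, hM2 i j t ht,
        smul_zero]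
    · intro i t j
      simp only [Pi.smul_apply, Polynomial.smul_modByMonic, coeff_smul, hM3 i t j]
    · intro i j t h1 h2 h3
      simp only [Pi.smul_apply, Polynomial.smul_modByMonic, coeff_smul, hM4 i j t h1 h2 h3,
        smul_zero]
    · intro j hj
      simp only [Pi.smul_apply]
      exact le_trans (degree_smul_le _ _) (hM5 j hj)
    · intro j hj
      simp only [Pi.smul_apply]
      exact le_trans (degree_smul_le _ _) (hM6 j hj)
  set Ssub : Submodule F (Fin d → F[X]) :=
    { carrier := WSet
      add_mem' := fun {M N} hM hN => hadd M N hM hN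
      zero_mem' := hzero
      smul_mem' := fun c M hM => hsmul c M hM } with hSsub
  refine ⟨Ssub, rfl, ?_⟩
  -- the coordinate map
  haveI instCond : DecidablePred Cond := fun x => by rw [hCond]; infer_instance
  let π : (Fin d → F[X]) →ₗ[F] ({x : Fin ν × Fin d × Fin d // Cond x} → F) :=
    { toFun := fun M x => (M x.1.2.2).coeff ((x.1.1 : ℕ) * nℓ + (x.1.2.1 : ℕ))
      map_add' := fun M N => by funext x; simp
      map_smul' := fun c M => by funext x; simp }
  have hπapp : ∀ (M : Fin d → F[X]) (x : {x : Fin ν × Fin d × Fin d // Cond x}),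
      π M x = (M x.1.2.2).coeff ((x.1.1 : ℕ) * nℓ + (x.1.2.1 : ℕ)) := fun _ _ => rfl
  -- kernel is trivial
  have hker : ∀ M : Fin d → F[X], M ∈ WSet → π M = 0 → M = 0 := by
    intro M hMW hz
    obtain ⟨h1, h2, h3, h4, h5, h6⟩ := hMW
    have hdegall : ∀ j : Fin d, (M j).degree ≤ ((a * nℓ + d - 1 : ℕ) : WithBot ℕ) := by
      intro j
      by_cases hj : (j : ℕ) < p
      · exact h5 j (by omega)
      · exact (h6 j (by omega)).trans
          (by exact_mod_cast (by omega : a * nℓ + p - 1 ≤ a * nℓ + d - 1))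
    have hsym : ∀ (s : Fin ν) (t j : Fin d),
        (M j).coeff ((s : ℕ) * nℓ + (t : ℕ)) = (M t).coeff ((s : ℕ) * nℓ + (j : ℕ)) := by
      intro s t j
      have h0 := MBRAux.vand_kill hζ
        (fun s => (M j).coeff ((s : ℕ) * nℓ + (t : ℕ))
          - (M t).coeff ((s : ℕ) * nℓ + (j : ℕ)))
        (fun i => by
          have hC2 := h3 i t j
          rw [hres _ (h1 j) i t (lt_trans t.isLt hdn),
            hres _ (h1 t) i j (lt_trans j.isLt hdn)] at hC2
          simp only [mul_sub, Finset.sum_sub_distrib]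
          rw [hC2, sub_self])
      have h0' := congrFun h0 s
      simpa [sub_eq_zero] using h0'
    funext j
    ext k
    simp only [Pi.zero_apply, Polynomial.coeff_zero]
    by_cases hk : ν * nℓ ≤ k
    · exact Polynomial.coeff_eq_zero_of_degree_lt
        (lt_of_lt_of_le (h1 j) (by exact_mod_cast hk))
    · push_neg at hk
      have hsν : k / nℓ < ν := (Nat.div_lt_iff_lt_mul hnℓ0).mpr (by omega)
      set t := k % nℓ with htdef
      have htnℓ : t < nℓ := Nat.mod_lt _ hnℓ0
      have hk' : (k / nℓ) * nℓ + t = k := by rw [mul_comm]; exact Nat.div_add_mod k nℓ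
      set sF : Fin ν := ⟨k / nℓ, hsν⟩ with hsF
      by_cases hsa : a < k / nℓ
      · refine Polynomial.coeff_eq_zero_of_degree_lt (lt_of_le_of_lt (hdegall j) ?_)
        have hmul : (a + 1) * nℓ ≤ (k / nℓ) * nℓ := Nat.mul_le_mul_right _ (by omega)
        have hexp : (a + 1) * nℓ = a * nℓ + nℓ := by ring
        exact_mod_cast (by omega : a * nℓ + d - 1 < k)
      · push_neg at hsa
        by_cases hdt : d ≤ t
        · have hc := hkill (M j) (h1 j) t htnℓ (fun i => h2 i j t hdt) sF
          rw [← hk']; exact hc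
        · push_neg at hdt
          set tF : Fin d := ⟨t, hdt⟩ with htF
          by_cases hrt : r ≤ t ∧ r ≤ (j : ℕ)
          · have hc := hkill (M j) (h1 j) t htnℓ
              (fun i => h4 i j t hrt.1 (by omega) hrt.2) sF
            rw [← hk']; exact hc
          · by_cases hpt : k / nℓ = a ∧ p ≤ t ∧ p ≤ (j : ℕ)
            · refine Polynomial.coeff_eq_zero_of_degree_lt
                (lt_of_le_of_lt (h6 j hpt.2.2) ?_)
              have haux : (k / nℓ) * nℓ = a * nℓ := by rw [hpt.1]
              exact_mod_cast (by omega : a * nℓ + p - 1 < k)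
            · push_neg at hrt hpt
              by_cases htj : t ≤ (j : ℕ)
              · have htr : t < r := by
                  by_contra h'
                  have := hrt (by omega)
                  omega
                have hcond : Cond (sF, tF, j) := by
                  rw [hCond]
                  show t ≤ (j : ℕ) ∧ t < r ∧ (k / nℓ < a ∨ (k / nℓ = a ∧ t < p))
                  refine ⟨htj, htr, ?_⟩
                  rcases lt_or_eq_of_le hsa with h | h
                  · exact Or.inl h
                  · right
                    refine ⟨h, ?_⟩
                    by_contra h'
                    have := hpt h (by omega)
                    omega
                have hzz := congrFun hz ⟨(sF, tF, j), hcond⟩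
                rw [hπapp] at hzz
                rw [← hk']; exact hzz
              · push_neg at htj
                have hjr : (j : ℕ) < r := by
                  by_contra h'
                  have := hrt (by omega)
                  omega
                have hswap := hsym sF tF j
                have hcond : Cond (sF, j, tF) := by
                  rw [hCond]
                  show (j : ℕ) ≤ t ∧ (j : ℕ) < r ∧ (k / nℓ < a ∨ (k / nℓ = a ∧ (j : ℕ) < p))
                  refine ⟨by omega, hjr, ?_⟩
                  rcases lt_or_eq_of_le hsa with h | h
                  · exact Or.inl h
                  · right
                    refine ⟨h, ?_⟩
                    by_contra h'
                    have := hpt h (by omega)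
                    omega
                have hzz := congrFun hz ⟨(sF, j, tF), hcond⟩
                rw [hπapp] at hzz
                have hfin := hswap.trans hzz
                rw [← hk']; exact hfin
  -- surjectivity
  have hCondIff : ∀ (s : Fin ν) (t j : Fin d), Cond (s, t, j) ↔
      ((t : ℕ) ≤ (j : ℕ) ∧ (t : ℕ) < r ∧
        ((s : ℕ) < a ∨ ((s : ℕ) = a ∧ (t : ℕ) < p))) := by
    intro s t j
    rw [hCond]
  have hminmax : ∀ t j : Fin d, (t ⊓ j = t ∧ t ⊔ j = j) ∨ (t ⊓ j = j ∧ t ⊔ j = t) := by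
    intro t j
    rcases le_total t j with h | h
    · exact Or.inl ⟨inf_eq_left.mpr h, sup_eq_right.mpr h⟩
    · exact Or.inr ⟨inf_eq_right.mpr h, sup_eq_left.mpr h⟩
  have hsurj : Function.Surjective (π.comp Ssub.subtype) := by
    intro cvec
    set E : Fin ν → Fin d → Fin d → F := fun s t j =>
      if h : Cond (s, t ⊓ j, t ⊔ j) then cvec ⟨(s, t ⊓ j, t ⊔ j), h⟩ else 0 with hE
    have hEsymm : ∀ (s : Fin ν) (t j : Fin d), E s t j = E s j t := by
      intro s t j
      simp only [hE]
      rw [inf_comm, sup_comm]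
    set M₀ : Fin d → F[X] := fun j => ∑ s : Fin ν, ∑ t : Fin d,
      C (E s t j) * X ^ ((s : ℕ) * nℓ + (t : ℕ)) with hM₀
    have hcoeff1 : ∀ (j : Fin d) (s : Fin ν) (t : Fin d),
        (M₀ j).coeff ((s : ℕ) * nℓ + (t : ℕ)) = E s t j := by
      intro j s t
      simp only [hM₀]
      rw [finset_sum_coeff, Finset.sum_eq_single s]
      · rw [finset_sum_coeff, Finset.sum_eq_single t]
        · rw [coeff_C_mul, coeff_X_pow, if_pos rfl, mul_one]
        · intro u _ hu
          rw [coeff_C_mul, coeff_X_pow, if_neg, mul_zero]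
          intro hc
          obtain ⟨-, h2'⟩ := MBRAux.exp_inj (lt_trans t.isLt hdn) (lt_trans u.isLt hdn) hc
          exact hu (Fin.ext h2'.symm)
        · intro h; exact absurd (Finset.mem_univ _) h
      · intro s' _ hs'
        rw [finset_sum_coeff]
        refine Finset.sum_eq_zero fun u _ => ?_
        rw [coeff_C_mul, coeff_X_pow, if_neg, mul_zero]
        intro hc
        obtain ⟨h1', -⟩ := MBRAux.exp_inj (lt_trans t.isLt hdn) (lt_trans u.isLt hdn) hc
        exact hs' (Fin.ext h1'.symm)
      · intro h; exact absurd (Finset.mem_univ _) h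
    have hcoeff0 : ∀ (j : Fin d) (k : ℕ),
        (∀ (s : Fin ν) (t : Fin d), (s : ℕ) * nℓ + (t : ℕ) ≠ k) → (M₀ j).coeff k = 0 := by
      intro j k hk
      simp only [hM₀]
      rw [finset_sum_coeff]
      refine Finset.sum_eq_zero fun s _ => ?_
      rw [finset_sum_coeff]
      refine Finset.sum_eq_zero fun u _ => ?_
      rw [coeff_C_mul, coeff_X_pow, if_neg (fun hc => hk s u hc.symm), mul_zero]
    have hEs : ∀ (s : Fin ν) (t j : Fin d), a < (s : ℕ) → E s t j = 0 := by
      intro s t j hs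
      simp only [hE]
      rw [dif_neg]
      rw [hCondIff]
      rintro ⟨-, -, h | h⟩
      · omega
      · rcases h with ⟨h1', -⟩; omega
    have hEr : ∀ (s : Fin ν) (t j : Fin d), r ≤ (t : ℕ) → r ≤ (j : ℕ) → E s t j = 0 := by
      intro s t j h1' h2'
      simp only [hE]
      rw [dif_neg]
      rw [hCondIff]
      rintro ⟨-, hlt, -⟩
      rcases hminmax t j with ⟨hm, -⟩ | ⟨hm, -⟩ <;> rw [hm] at hlt <;> omega
    have hEp : ∀ (s : Fin ν) (t j : Fin d), (s : ℕ) = a → p ≤ (t : ℕ) → p ≤ (j : ℕ) →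
        E s t j = 0 := by
      intro s t j hsa h1' h2'
      simp only [hE]
      rw [dif_neg]
      rw [hCondIff]
      rintro ⟨-, -, h | h⟩
      · omega
      · rcases h with ⟨-, hlt⟩
        rcases hminmax t j with ⟨hm, -⟩ | ⟨hm, -⟩ <;> rw [hm] at hlt <;> omega
    have hdegb : ∀ (j : Fin d) (B : ℕ),
        (∀ (s : Fin ν) (t : Fin d), E s t j ≠ 0 → (s : ℕ) * nℓ + (t : ℕ) ≤ B) →
        (M₀ j).degree ≤ (B : WithBot ℕ) := by
      intro j B hB
      simp only [hM₀]
      refine (degree_sum_le _ _).trans (Finset.sup_le fun s _ => ?_)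
      refine (degree_sum_le _ _).trans (Finset.sup_le fun u _ => ?_)
      by_cases h0 : E s u j = 0
      · simp [h0]
      · exact (degree_C_mul_X_pow_le _ _).trans (by exact_mod_cast hB s u h0)
    have hdegb1 : ∀ j : Fin d, (M₀ j).degree ≤ ((a * nℓ + d - 1 : ℕ) : WithBot ℕ) := by
      intro j
      refine hdegb j _ fun s u hne => ?_
      have hs : (s : ℕ) ≤ a := by
        by_contra h'
        exact hne (hEs s u j (by omega))
      have hmul : (s : ℕ) * nℓ ≤ a * nℓ := Nat.mul_le_mul_right _ hs
      have hu := u.isLt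
      omega
    have hdeglt : ∀ j : Fin d, (M₀ j).degree < ((ν * nℓ : ℕ) : WithBot ℕ) := by
      intro j
      refine lt_of_le_of_lt (hdegb1 j) ?_
      have hm1 : (a + 1) * nℓ ≤ ν * nℓ := Nat.mul_le_mul_right _ (by omega)
      have hm2 : (a + 1) * nℓ = a * nℓ + nℓ := by ring
      exact_mod_cast (by omega : a * nℓ + d - 1 < ν * nℓ)
    have hmem : M₀ ∈ WSet := by
      refine ⟨hdeglt, ?_, ?_, ?_, ?_, ?_⟩
      · -- C1
        intro i j t ht
        by_cases htn : t < nℓ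
        · rw [hres _ (hdeglt j) i t htn]
          refine Finset.sum_eq_zero fun s _ => ?_
          have hz0 : (M₀ j).coeff ((s : ℕ) * nℓ + t) = 0 := by
            refine hcoeff0 j _ fun s' t' hc => ?_
            obtain ⟨-, h2'⟩ := MBRAux.exp_inj (lt_trans t'.isLt hdn) htn hc
            have := t'.isLt
            omega
          rw [hz0, mul_zero]
        · push_neg at htn
          refine Polynomial.coeff_eq_zero_of_degree_lt ?_
          refine lt_of_lt_of_le (degree_modByMonic_lt _ (hfmon i)) ?_
          rw [hfdeg i]
          exact_mod_cast htn
      · -- C2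
        intro i t j
        rw [hres _ (hdeglt j) i t (lt_trans t.isLt hdn),
          hres _ (hdeglt t) i j (lt_trans j.isLt hdn)]
        refine Finset.sum_congr rfl fun s _ => ?_
        rw [hcoeff1, hcoeff1, hEsymm]
      · -- C3
        intro i j t h1' h2' h3'
        have htd : t < d := by omega
        have htn : t < nℓ := by omega
        rw [hres _ (hdeglt j) i t htn]
        refine Finset.sum_eq_zero fun s _ => ?_
        rw [show (s : ℕ) * nℓ + t = (s : ℕ) * nℓ + ((⟨t, htd⟩ : Fin d) : ℕ) from rfl,
          hcoeff1, hEr s ⟨t, htd⟩ j h1' h3', mul_zero]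
      · -- C4 first
        intro j _
        exact hdegb1 j
      · -- C4 second
        intro j hj
        refine hdegb j _ fun s u hne => ?_
        have hs : (s : ℕ) ≤ a := by
          by_contra h'
          exact hne (hEs s u j (by omega))
        rcases lt_or_eq_of_le hs with h | h
        · have hmul : ((s : ℕ) + 1) * nℓ ≤ a * nℓ := Nat.mul_le_mul_right _ (by omega)
          have hexp : ((s : ℕ) + 1) * nℓ = (s : ℕ) * nℓ + nℓ := by ring
          have hu := u.isLt
          omega
        · have hup : (u : ℕ) < p := by
            by_contra h'
            exact hne (hEp s u j h (by omega) hj)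
          have hmul : (s : ℕ) * nℓ = a * nℓ := by rw [h]
          omega
    refine ⟨⟨M₀, hmem⟩, ?_⟩
    funext x
    obtain ⟨⟨s, t, j⟩, hx⟩ := x
    have hx' := (hCondIff s t j).mp hx
    have htj : t ≤ j := by
      rw [Fin.le_def]
      exact hx'.1
    show (M₀ j).coeff ((s : ℕ) * nℓ + (t : ℕ)) = cvec ⟨(s, t, j), hx⟩
    rw [hcoeff1]
    simp only [hE]
    rw [inf_eq_left.mpr htj, sup_eq_right.mpr htj, dif_pos hx]
  have hinj : Function.Injective (π.comp Ssub.subtype) := by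
    rw [← LinearMap.ker_eq_bot, Submodule.eq_bot_iff]
    rintro ⟨M, hM⟩ hy
    have hy' : π M = 0 := hy
    exact Subtype.ext (hker M hM hy')
  have e := LinearEquiv.ofBijective (π.comp Ssub.subtype) ⟨hinj, hsurj⟩
  rw [e.finrank_eq, Module.finrank_pi]
  -- cardinality count
  rw [Fintype.card_subtype, Finset.card_filter, Fintype.sum_prod_type]
  have hfix : ∀ s : Fin ν,
      (∑ y : Fin d × Fin d, if Cond (s, y) then 1 else 0)
        = (if (s : ℕ) < a then r * d - r * (r - 1) / 2
           else if (s : ℕ) = a then p * d - p * (p - 1) / 2 else 0) := by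
    intro s
    by_cases hsa : (s : ℕ) < a
    · rw [if_pos hsa, ← MBRAux.card_tri r d hrd, Finset.card_filter]
      refine Finset.sum_congr rfl fun y _ => ?_
      refine if_congr ?_ rfl rfl
      simp only [hCond]
      constructor
      · rintro ⟨h1', h2', _⟩; exact ⟨h1', h2'⟩
      · rintro ⟨h1', h2'⟩; exact ⟨h1', h2', Or.inl hsa⟩
    · by_cases hsa' : (s : ℕ) = a
      · rw [if_neg hsa, if_pos hsa', ← MBRAux.card_tri p d (le_trans hpr hrd),
          Finset.card_filter]
        refine Finset.sum_congr rfl fun y _ => ?_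
        refine if_congr ?_ rfl rfl
        simp only [hCond]
        constructor
        · rintro ⟨h1', h2', h3'⟩
          rcases h3' with h | h
          · omega
          · exact ⟨h1', h.2⟩
        · rintro ⟨h1', h2'⟩
          exact ⟨h1', by omega, Or.inr ⟨hsa', h2'⟩⟩
      · rw [if_neg hsa, if_neg hsa']
        refine Finset.sum_eq_zero fun y _ => ?_
        rw [if_neg]
        simp only [hCond]
        rintro ⟨_, _, h | h⟩
        · exact hsa h
        · exact hsa' h.1
  rw [Finset.sum_congr rfl fun s _ => hfix s]
  rw [Fin.sum_univ_eq_sum_range (fun s => if s < a then r * d - r * (r - 1) / 2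
    else if s = a then p * d - p * (p - 1) / 2 else 0) ν]
  rw [← Finset.sum_range_add_sum_Ico _ (by omega : a + 1 ≤ ν), Finset.sum_range_succ]
  have h1 : ∑ s ∈ Finset.range a, (if s < a then r * d - r * (r - 1) / 2
      else if s = a then p * d - p * (p - 1) / 2 else 0)
      = a * (r * d - r * (r - 1) / 2) := by
    rw [Finset.sum_congr rfl (fun s hs => if_pos (Finset.mem_range.mp hs))]
    simp [Finset.sum_const, mul_comm]
  have h3 : ∑ s ∈ Finset.Ico (a + 1) ν, (if s < a then r * d - r * (r - 1) / 2
      else if s = a then p * d - p * (p - 1) / 2 else 0) = 0 := by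
    refine Finset.sum_eq_zero fun s hs => ?_
    have := Finset.mem_Ico.mp hs
    rw [if_neg (by omega), if_neg (by omega)]
  rw [h1, h3, add_zero, if_neg (lt_irrefl a), if_pos rfl]
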